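/- If a finite-dimensional solvable Lie algebra over an algebraically closed field of characteristic zero admits an invertible Leibniz-derivation of some order k ≥ 1, then it is nilpotent. -/

import Mathlib

open Finset

/-- Right-nested bracket `[x₁,[x₂,…,[x_k,x_{k+1}]…]]` of a list of elements. -/
def nestedBracket {L : Type*} [LieRing L] : List L → L
  | [] => 0
  | [x] => x
  | x :: xs => ⁅x, nestedBracket xs⁆

/-- A Leibniz-derivation of order `k` of a Lie algebra. -/
def IsLeibnizDerivation {F L : Type*} [CommRing F] [LieRing L] [LieAlgebra F L] (k : ℕ)
    (P : L →ₗ[F] L) : Prop :=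
  ∀ x : Fin (k + 1) → L,
    P (nestedBracket (List.ofFn x)) =
      ∑ i : Fin (k + 1), nestedBracket (List.ofFn (Function.update x i (P (x i))))

section Part1

variable {F L : Type*} [Field F] [LieRing L] [LieAlgebra F L]

/-- Abbreviation for the nested bracket of a tuple. -/
def nb {n : ℕ} (x : Fin (n + 1) → L) : L := nestedBracket (List.ofFn x)

lemma nb_zero (x : Fin 1 → L) : nb x = x 0 := by
  simp [nb, List.ofFn_succ, nestedBracket]

lemma nb_succ {n : ℕ} (x : Fin (n + 2) → L) : nb x = ⁅x 0, nb (x ∘ Fin.succ)⁆ := by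
  simp only [nb, List.ofFn_succ]
  rfl

lemma nb_update_add {n : ℕ} (x : Fin (n + 1) → L) (i : Fin (n + 1)) (a b : L) :
    nb (Function.update x i (a + b)) =
      nb (Function.update x i a) + nb (Function.update x i b) := by
  induction n with
  | zero =>
    have : i = 0 := Fin.ext (by omega)
    subst this
    simp [nb_zero]
  | succ n ih =>
    induction i using Fin.cases with
    | zero =>
      have hc : ∀ v : L, (Function.update x 0 v) ∘ Fin.succ = x ∘ Fin.succ := by
        intro v; funext j
        simp [Function.comp, Function.update_of_ne (Fin.succ_ne_zero j)]
      simp only [nb_succ, hc, Function.update_self, add_lie]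
    | succ j =>
      have h0 : ∀ v : L, (Function.update x j.succ v) 0 = x 0 := by
        intro v; exact Function.update_of_ne (Fin.succ_ne_zero j).symm _ _
      have hc : ∀ v : L, (Function.update x j.succ v) ∘ Fin.succ =
          Function.update (x ∘ Fin.succ) j v := by
        intro v; funext l
        by_cases hl : l = j
        · subst hl; simp
        · simp [Function.comp, Function.update_of_ne hl,
            Function.update_of_ne (fun h => hl (Fin.succ_injective _ h))]
      simp only [nb_succ, h0, hc, ih, lie_add]

lemma nb_update_smul {n : ℕ} (x : Fin (n + 1) → L) (i : Fin (n + 1)) (c : F) (a : L) :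
    nb (Function.update x i (c • a)) = c • nb (Function.update x i a) := by
  induction n with
  | zero =>
    have : i = 0 := Fin.ext (by omega)
    subst this
    simp [nb_zero]
  | succ n ih =>
    induction i using Fin.cases with
    | zero =>
      have hc : ∀ v : L, (Function.update x 0 v) ∘ Fin.succ = x ∘ Fin.succ := by
        intro v; funext j
        simp [Function.comp, Function.update_of_ne (Fin.succ_ne_zero j)]
      simp only [nb_succ, hc, Function.update_self, smul_lie]
    | succ j =>
      have h0 : ∀ v : L, (Function.update x j.succ v) 0 = x 0 := by
        intro v; exact Function.update_of_ne (Fin.succ_ne_zero j).symm _ _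
      have hc : ∀ v : L, (Function.update x j.succ v) ∘ Fin.succ =
          Function.update (x ∘ Fin.succ) j v := by
        intro v; funext l
        by_cases hl : l = j
        · subst hl; simp
        · simp [Function.comp, Function.update_of_ne hl,
            Function.update_of_ne (fun h => hl (Fin.succ_injective _ h))]
      simp only [nb_succ, h0, hc, ih, lie_smul]

lemma nb_update_sub {n : ℕ} (x : Fin (n + 1) → L) (i : Fin (n + 1)) (a b : L) :
    nb (Function.update x i (a - b)) =
      nb (Function.update x i a) - nb (Function.update x i b) := by
  have h := nb_update_add x i b (a - b)
  rw [add_sub_cancel] at h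
  rw [h]; abel

lemma nb_update_zero {n : ℕ} (x : Fin (n + 1) → L) (i : Fin (n + 1)) :
    nb (Function.update x i (0 : L)) = 0 := by
  have h := nb_update_add x i 0 0
  rw [add_zero] at h
  exact left_eq_add.mp h

lemma nb_eq_zero_of_eq_zero {n : ℕ} (x : Fin (n + 1) → L) (i : Fin (n + 1)) (h : x i = 0) :
    nb x = 0 := by
  have : x = Function.update x i 0 := by
    funext j
    by_cases hj : j = i
    · subst hj; simpa using h
    · simp [Function.update_of_ne hj]
  rw [this, nb_update_zero]

end Part1

section Part2

variable {F L : Type*} [Field F] [LieRing L] [LieAlgebra F L]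

/-- The Leibniz rule in `nb` form. -/
lemma leibniz_nb {k : ℕ} {P : L →ₗ[F] L} (hP : IsLeibnizDerivation k P) (x : Fin (k + 1) → L) :
    P (nb x) = ∑ i : Fin (k + 1), nb (Function.update x i (P (x i))) :=
  hP x

/-- Central identity: `P - (∑ αᵢ) • 1` acts as the sum of slotwise `P - αᵢ • 1`. -/
lemma central_identity {k : ℕ} {P : L →ₗ[F] L} (hP : IsLeibnizDerivation k P)
    (α : Fin (k + 1) → F) (y : Fin (k + 1) → L) :
    (P - (∑ i, α i) • 1) (nb y) =
      ∑ i : Fin (k + 1), nb (Function.update y i ((P - α i • 1) (y i))) := by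
  have h1 : ∀ i : Fin (k + 1),
      nb (Function.update y i ((P - α i • 1) (y i))) =
        nb (Function.update y i (P (y i))) - α i • nb y := by
    intro i
    have : (P - α i • 1) (y i) = P (y i) - α i • y i := rfl
    rw [this, nb_update_sub, nb_update_smul, Function.update_eq_self]
  simp only [h1, Finset.sum_sub_distrib, ← leibniz_nb hP, ← Finset.sum_smul]
  rfl

/-- Key grading lemma: nested brackets of generalized eigenvectors are generalized
eigenvectors for the sum of eigenvalues. -/
lemma key_grading {k : ℕ} {P : L →ₗ[F] L} (hP : IsLeibnizDerivation k P)
    (α : Fin (k + 1) → F) (x : Fin (k + 1) → L) (d : ℕ)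
    (hx : ∀ i, ((P - α i • 1) ^ d) (x i) = 0) :
    ((P - (∑ i, α i) • 1) ^ ((k + 1) * d)) (nb x) = 0 := by
  set s : F := ∑ i, α i with hs
  set Q : Fin (k + 1) → (L →ₗ[F] L) := fun i => P - α i • 1 with hQ
  -- the span of "monomial" values of total degree N
  set S : ℕ → Set L := fun N =>
    {z | ∃ m : Fin (k + 1) → ℕ, (∑ i, m i) = N ∧ z = nb fun i => ((Q i) ^ (m i)) (x i)} with hS
  have main : ∀ N : ℕ, ((P - s • 1) ^ N) (nb x) ∈ Submodule.span F (S N) := by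
    intro N
    induction N with
    | zero =>
      apply Submodule.subset_span
      exact ⟨fun _ => 0, by simp, by simp⟩
    | succ N ih =>
      have hstep : ∀ u ∈ Submodule.span F (S N),
          (P - s • 1) u ∈ Submodule.span F (S (N + 1)) := by
        intro u hu
        induction hu using Submodule.span_induction with
        | mem z hz =>
          obtain ⟨m, hm, rfl⟩ := hz
          rw [central_identity hP α]
          apply Submodule.sum_mem
          intro i _
          apply Submodule.subset_span
          refine ⟨Function.update m i (m i + 1), ?_, ?_⟩
          · rw [Finset.sum_update_of_mem (Finset.mem_univ i), Finset.sdiff_singleton_eq_erase]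
            have h2 := Finset.sum_erase_add Finset.univ m (Finset.mem_univ i)
            omega
          · congr 1
            funext j
            by_cases hj : j = i
            · subst hj
              simp only [Function.update_self]
              rw [pow_succ']
              rfl
            · simp [Function.update_of_ne hj]
        | zero => simp
        | add a b _ _ ha hb => rw [map_add]; exact Submodule.add_mem _ ha hb
        | smul c a _ ha => rw [map_smul]; exact Submodule.smul_mem _ c ha
      have : ((P - s • 1) ^ (N + 1)) (nb x) = (P - s • 1) (((P - s • 1) ^ N) (nb x)) := by
        rw [pow_succ']
        rfl
      rw [this]
      exact hstep _ ih
  have hbot : Submodule.span F (S ((k + 1) * d)) ≤ ⊥ := by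
    rw [Submodule.span_le]
    rintro z ⟨m, hm, rfl⟩
    have hex : ∃ i, d ≤ m i := by
      by_contra hcon
      push_neg at hcon
      have : (∑ i, m i) < (k + 1) * d ∨ d = 0 := by
        rcases Nat.eq_zero_or_pos d with h0 | h0
        · right; exact h0
        · left
          calc (∑ i : Fin (k + 1), m i) ≤ ∑ i : Fin (k + 1), (d - 1) :=
                Finset.sum_le_sum fun i _ => Nat.le_sub_one_of_lt (hcon i)
            _ = (k + 1) * (d - 1) := by
                rw [Finset.sum_const, Finset.card_univ, Fintype.card_fin, smul_eq_mul]
            _ < (k + 1) * d := by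
                have h1 : (k + 1) * (d - 1) + (k + 1) * 1 = (k + 1) * d := by
                  rw [← Nat.mul_add]
                  congr 1
                  omega
                omega
      rcases this with h | h
      · omega
      · subst h
        exact absurd (Nat.zero_le _) (not_le.mpr (hcon ⟨0, Nat.succ_pos k⟩))
    obtain ⟨i, hi⟩ := hex
    have : ((Q i) ^ (m i)) (x i) = 0 := by
      have : (Q i) ^ (m i) = (Q i) ^ (m i - d) * (Q i) ^ d := by
        rw [← pow_add]
        congr 1
        omega
      rw [this, Module.End.mul_apply]
      have hxi : ((Q i) ^ d) (x i) = 0 := hx i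
      rw [hxi, map_zero]
    simp only [SetLike.mem_coe, Submodule.mem_bot]
    exact nb_eq_zero_of_eq_zero _ i this
  exact (Submodule.mem_bot F).mp (hbot (main ((k + 1) * d)))

end Part2

section Part3

variable {F L : Type*} [Field F] [LieRing L] [LieAlgebra F L]

lemma nb_snoc_const (v : L) : ∀ (k : ℕ) (w : L),
    nb (Fin.snoc (fun _ : Fin k => v) w) = ((LieAlgebra.ad F L v) ^ k) w := by
  intro k
  induction k with
  | zero =>
    intro w
    rw [nb_zero]
    simp [Fin.snoc]
  | succ k ih =>
    intro w
    rw [nb_succ]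
    have h0 : (Fin.snoc (fun _ : Fin (k + 1) => v) w : Fin (k + 2) → L) 0 = v := by
      have : (0 : Fin (k + 2)) = Fin.castSucc 0 := rfl
      rw [this, Fin.snoc_castSucc]
    have hc : (Fin.snoc (fun _ : Fin (k + 1) => v) w : Fin (k + 2) → L) ∘ Fin.succ =
        (Fin.snoc (fun _ : Fin k => v) w : Fin (k + 1) → L) := by
      funext j
      induction j using Fin.lastCases with
      | last =>
        simp only [Function.comp]
        rw [Fin.succ_last, Fin.snoc_last, Fin.snoc_last]
      | cast j =>
        simp only [Function.comp]
        rw [Fin.snoc_castSucc, Fin.succ_castSucc, Fin.snoc_castSucc]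
    rw [h0, hc, ih]
    rw [pow_succ']
    rfl

variable [FiniteDimensional F L] {k : ℕ} {P : L →ₗ[F] L}

local notation "E" => fun μ => Module.End.genEigenspace P μ ⊤

lemma step_lemma (hP : IsLeibnizDerivation k P) {μ γ : F} {v w : L}
    (hv : v ∈ Module.End.genEigenspace P μ ⊤) (hw : w ∈ Module.End.genEigenspace P γ ⊤) :
    ((LieAlgebra.ad F L v) ^ k) w ∈ Module.End.genEigenspace P ((k : F) * μ + γ) ⊤ := by
  obtain ⟨d₁, hd₁⟩ := Module.End.mem_genEigenspace_top.mp hv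
  obtain ⟨d₂, hd₂⟩ := Module.End.mem_genEigenspace_top.mp hw
  rw [LinearMap.mem_ker] at hd₁ hd₂
  set d := d₁ + d₂ with hd
  have hv' : ((P - μ • 1) ^ d) v = 0 := by
    rw [hd, add_comm, pow_add, Module.End.mul_apply, hd₁, map_zero]
  have hw' : ((P - γ • 1) ^ d) w = 0 := by
    rw [hd, pow_add, Module.End.mul_apply, hd₂, map_zero]
  set α : Fin (k + 1) → F := Fin.snoc (fun _ : Fin k => μ) γ with hα
  set x : Fin (k + 1) → L := Fin.snoc (fun _ : Fin k => v) w with hx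
  have hxd : ∀ i, ((P - α i • 1) ^ d) (x i) = 0 := by
    intro i
    induction i using Fin.lastCases with
    | last =>
      have h1 : α (Fin.last k) = γ := by rw [hα, Fin.snoc_last]
      have h2 : x (Fin.last k) = w := by rw [hx, Fin.snoc_last]
      rw [h1, h2]; exact hw'
    | cast j =>
      have h1 : α (Fin.castSucc j) = μ := by rw [hα, Fin.snoc_castSucc]
      have h2 : x (Fin.castSucc j) = v := by rw [hx, Fin.snoc_castSucc]
      rw [h1, h2]; exact hv'
  have hkey := key_grading hP α x d hxd
  have hsum : (∑ i, α i) = (k : F) * μ + γ := by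
    rw [hα, Fin.sum_univ_castSucc]
    simp [Fin.snoc_castSucc, Fin.snoc_last, nsmul_eq_mul]
  have : nb x ∈ Module.End.genEigenspace P ((k : F) * μ + γ) ⊤ := by
    rw [Module.End.mem_genEigenspace_top]
    exact ⟨(k + 1) * d, by rw [LinearMap.mem_ker, ← hsum]; exact hkey⟩
  rw [← nb_snoc_const v k w]
  exact this

lemma genEigenspace_zero_eq_bot (hinj : Function.Injective P) :
    Module.End.genEigenspace P 0 ⊤ = ⊥ := by
  rw [eq_bot_iff]
  intro z hz
  obtain ⟨l, hl⟩ := Module.End.mem_genEigenspace_top.mp hz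
  rw [LinearMap.mem_ker] at hl
  simp only [zero_smul, sub_zero] at hl
  have : ∀ (l : ℕ) (z : L), (P ^ l) z = 0 → z = 0 := by
    intro l
    induction l with
    | zero => intro z h; simpa using h
    | succ l ih =>
      intro z h
      rw [pow_succ, Module.End.mul_apply] at h
      exact hinj (by simpa using ih _ h)
  simpa using this l z hl

lemma ad_nilpotent_of_genEigenvector [CharZero F] [IsAlgClosed F] (hk : 1 ≤ k)
    (hP : IsLeibnizDerivation k P) (hinj : Function.Injective P)
    {μ : F} {v : L} (hv : v ∈ Module.End.genEigenspace P μ ⊤) :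
    IsNilpotent (LieAlgebra.ad F L v) := by
  classical
  rcases eq_or_ne v 0 with rfl | hv0
  · exact ⟨1, by simp⟩
  have hμ : μ ≠ 0 := by
    rintro rfl
    rw [genEigenspace_zero_eq_bot hinj] at hv
    exact hv0 (Submodule.mem_bot F |>.mp hv)
  have hδ : (k : F) * μ ≠ 0 := by
    apply mul_ne_zero _ hμ
    exact_mod_cast Nat.cast_ne_zero.mpr (by omega)
  set δ := (k : F) * μ with hδdef
  -- finitely many eigenvalues
  have hindep : iSupIndep (fun γ => Module.End.genEigenspace P γ ⊤) :=
    Module.End.independent_genEigenspace P ⊤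
  have hfin : Set.Finite {γ : F | Module.End.genEigenspace P γ ⊤ ≠ ⊥} :=
    WellFoundedGT.finite_ne_bot_of_iSupIndep hindep
  set T := hfin.toFinset with hT
  set t := T.card with ht
  -- iterated step
  have hiter : ∀ (j : ℕ) (γ : F) (w : L), w ∈ Module.End.genEigenspace P γ ⊤ →
      ((LieAlgebra.ad F L v) ^ (k * j)) w ∈ Module.End.genEigenspace P (γ + j • δ) ⊤ := by
    intro j
    induction j with
    | zero => intro γ w hw; simpa using hw
    | succ j ih =>
      intro γ w hw
      have h1 : ((LieAlgebra.ad F L v) ^ k) w ∈ Module.End.genEigenspace P (δ + γ) ⊤ :=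
        step_lemma hP hv hw
      have h2 := ih (δ + γ) _ h1
      have heq : γ + (j + 1) • δ = δ + γ + j • δ := by
        rw [succ_nsmul]
        abel
      have h3 : (LieAlgebra.ad F L v) ^ (k * (j + 1)) =
          (LieAlgebra.ad F L v) ^ (k * j) * (LieAlgebra.ad F L v) ^ k := by
        rw [← pow_add, Nat.mul_succ]
      rw [heq, h3, Module.End.mul_apply]
      exact h2
  -- uniform kill exponent
  have hkill : ∀ (γ : F) (w : L), w ∈ Module.End.genEigenspace P γ ⊤ →
      ((LieAlgebra.ad F L v) ^ (k * (t + 1))) w = 0 := by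
    intro γ w hw
    have hexj : ∃ j ≤ t, Module.End.genEigenspace P (γ + j • δ) ⊤ = ⊥ := by
      by_contra hcon
      push_neg at hcon
      have hinj2 : Function.Injective (fun j : ℕ => γ + j • δ) := by
        intro a b hab
        simp only [nsmul_eq_mul] at hab
        have h4 : (a : F) * δ = (b : F) * δ := by
          have := add_left_cancel hab
          exact this
        have h5 : (a : F) = (b : F) := mul_right_cancel₀ hδ h4
        exact_mod_cast h5
      have hsub : (Finset.range (t + 1)).image (fun j : ℕ => γ + j • δ) ⊆ T := by
        intro z hz
        rw [Finset.mem_image] at hz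
        obtain ⟨j, hj, rfl⟩ := hz
        rw [hT, Set.Finite.mem_toFinset]
        exact hcon j (by rw [Finset.mem_range] at hj; omega)
      have hcard := Finset.card_le_card hsub
      rw [Finset.card_image_of_injective _ hinj2, Finset.card_range] at hcard
      omega
    obtain ⟨j, hj, hbot⟩ := hexj
    have h0 : ((LieAlgebra.ad F L v) ^ (k * j)) w = 0 := by
      have := hiter j γ w hw
      rw [hbot] at this
      simpa using this
    have hsplit : k * (t + 1) = k * (t + 1) - k * j + k * j := by
      have : k * j ≤ k * (t + 1) := Nat.mul_le_mul_left k (by omega)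
      omega
    rw [hsplit, pow_add, Module.End.mul_apply, h0, map_zero]
  refine ⟨k * (t + 1), ?_⟩
  have htop : (⊤ : Submodule F L) ≤
      LinearMap.ker ((LieAlgebra.ad F L v) ^ (k * (t + 1))) := by
    rw [← Module.End.iSup_maxGenEigenspace_eq_top P]
    apply iSup_le
    intro γ w hw
    rw [LinearMap.mem_ker]
    exact hkill γ w hw
  apply LinearMap.ext
  intro w
  have := htop (Submodule.mem_top : w ∈ ⊤)
  rw [LinearMap.mem_ker] at this
  simpa using this

end Part3

section LieTheorem

universe u v

attribute [local instance] LieRing.ofAssociativeRing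

variable {F : Type*} [Field F] [CharZero F] [IsAlgClosed F]

set_option maxHeartbeats 1000000 in
/-- Lie's theorem: a finite-dimensional representation of a solvable Lie algebra over an
algebraically closed field of characteristic zero has a common eigenvector. -/
lemma lie_common_eigenvector_aux {M : Type v} [AddCommGroup M] [Module F M]
    [FiniteDimensional F M] [Nontrivial M] :
    ∀ (n : ℕ) (K : Type u) [LieRing K] [LieAlgebra F K] [FiniteDimensional F K]
      [LieAlgebra.IsSolvable K], Module.finrank F K ≤ n →
      ∀ (ρ : K →ₗ⁅F⁆ Module.End F M),
      ∃ v : M, v ≠ 0 ∧ ∀ x : K, ∃ c : F, ρ x v = c • v := by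
  intro n
  induction n with
  | zero =>
    intro K _ _ _ _ hn ρ
    haveI : Subsingleton K := by
      rw [← Module.finrank_zero_iff (R := F)]
      omega
    obtain ⟨v, hv⟩ := exists_ne (0 : M)
    refine ⟨v, hv, fun x => ⟨0, ?_⟩⟩
    rw [show x = 0 from Subsingleton.elim x 0, map_zero ρ]
    simp
  | succ n ih =>
    intro K _ _ _ _ hn ρ
    by_cases hss : Subsingleton K
    · obtain ⟨v, hv⟩ := exists_ne (0 : M)
      refine ⟨v, hv, fun x => ⟨0, ?_⟩⟩
      rw [show x = 0 from Subsingleton.elim x 0, map_zero ρ]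
      simp
    haveI : Nontrivial K := not_subsingleton_iff_nontrivial.mp hss
    -- the derived ideal is proper
    have hDlt : LieAlgebra.derivedSeries F K 1 < ⊤ :=
      LieAlgebra.derivedSeries_lt_top_of_solvable F K
    have hx₀ : ∃ x₀ : K, x₀ ∉ LieAlgebra.derivedSeries F K 1 := by
      by_contra h
      push_neg at h
      exact hDlt.ne (by rw [eq_top_iff]; intro x _; exact h x)
    obtain ⟨x₀, hx₀⟩ := hx₀
    have hx₀' : x₀ ∉ (LieAlgebra.derivedSeries F K 1 : LieIdeal F K).toSubmodule :=
      fun h => hx₀ h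
    obtain ⟨φ, hφx, hφD⟩ := Submodule.exists_dual_map_eq_bot_of_notMem hx₀' inferInstance
    have hφ0 : ∀ z ∈ LieAlgebra.derivedSeries F K 1, φ z = 0 := by
      intro z hz
      have : φ z ∈ Submodule.map φ (LieAlgebra.derivedSeries F K 1 :
          LieIdeal F K).toSubmodule := Submodule.mem_map_of_mem hz
      rw [hφD] at this
      exact (Submodule.mem_bot F).mp this
    have hbracket : ∀ a b : K, φ ⁅a, b⁆ = 0 := by
      intro a b
      apply hφ0
      rw [LieAlgebra.derivedSeries_def, LieAlgebra.derivedSeriesOfIdeal_succ,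
        LieAlgebra.derivedSeriesOfIdeal_zero]
      exact LieSubmodule.lie_mem_lie (LieSubmodule.mem_top a) (LieSubmodule.mem_top b)
    -- the hyperplane subalgebra
    set A : LieSubalgebra F K :=
      { LinearMap.ker φ with
        lie_mem' := fun {x y} _ _ => hbracket x y } with hA
    have hmemA : ∀ x : K, x ∈ A ↔ φ x = 0 := fun x => Iff.rfl
    haveI hsolvA : LieAlgebra.IsSolvable ↥A := by
      apply Function.Injective.lieAlgebra_isSolvable (f := A.incl)
      rw [LieSubalgebra.coe_incl]
      exact Subtype.coe_injective
    have hfrA : Module.finrank F ↥A ≤ n := by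
      have h1 : Module.finrank F (LinearMap.range φ) + Module.finrank F (LinearMap.ker φ) =
          Module.finrank F K := LinearMap.finrank_range_add_finrank_ker φ
      have h2 : Module.finrank F (LinearMap.range φ) = 1 := by
        have hle : Module.finrank F (LinearMap.range φ) ≤ 1 := by
          have := Submodule.finrank_le (LinearMap.range φ)
          simpa [Module.finrank_self] using this
        have hge : 0 < Module.finrank F (LinearMap.range φ) := by
          haveI : Nontrivial (LinearMap.range φ) :=
            ⟨⟨⟨φ x₀, LinearMap.mem_range_self φ x₀⟩, 0, by simp [Subtype.ext_iff, hφx]⟩⟩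
          exact Module.finrank_pos
        omega
      have h4 : Module.finrank F ↥A = Module.finrank F (LinearMap.ker φ) := rfl
      omega
    obtain ⟨v₁, hv₁0, hv₁⟩ := ih ↥A hfrA (ρ.comp A.incl)
    -- the weight of A
    set χ : ↥A → F := fun a => Classical.choose (hv₁ a) with hχdef
    have hχ : ∀ a : ↥A, ρ (a : K) v₁ = χ a • v₁ := by
      intro a
      exact Classical.choose_spec (hv₁ a)
    -- every element of A brackets into A
    have hcl : ∀ (b : ↥A) (y : K), ⁅(b : K), y⁆ ∈ A := fun b y =>
      (hmemA _).mpr (hbracket _ _)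
    -- the core trace argument : χ vanishes on brackets
    have coreχ : ∀ (y : K) (b : ↥A), χ ⟨⁅(b : K), y⁆, hcl b y⟩ = 0 := by
      intro y
      set Y : Module.End F M := ρ y with hY
      set U : ℕ → Submodule F M :=
        fun i => Submodule.span F ((fun j => (Y ^ j) v₁) '' Set.Iio i) with hUdef
      have hUmono : Monotone U := fun i i' h =>
        Submodule.span_mono (Set.image_mono (fun j hj => lt_of_lt_of_le hj h))
      have hYmap : ∀ i, Submodule.map Y (U i) ≤ U (i + 1) := by
        intro i
        rw [hUdef, Submodule.map_span]
        apply Submodule.span_le.mpr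
        rintro z ⟨_, ⟨j, hj, rfl⟩, rfl⟩
        apply Submodule.subset_span
        refine ⟨j + 1, by simpa using Nat.succ_lt_succ hj, ?_⟩
        show (Y ^ (j + 1)) v₁ = Y ((Y ^ j) v₁)
        rw [pow_succ']
        rfl
      have hmem : ∀ j, (Y ^ j) v₁ ∈ U (j + 1) := fun j =>
        Submodule.subset_span ⟨j, by simp, rfl⟩
      have hU0 : U 0 = ⊥ := by
        rw [hUdef, eq_bot_iff]
        apply Submodule.span_le.mpr
        rintro z ⟨j, hj, rfl⟩
        exact absurd hj (by simp)
      -- key triangularity fact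
      have f3 : ∀ (j : ℕ) (b : ↥A),
          ρ (b : K) ((Y ^ j) v₁) - χ b • (Y ^ j) v₁ ∈ U j := by
        intro j
        induction j with
        | zero =>
          intro b
          simp only [pow_zero, Module.End.one_apply, hχ b, sub_self]
          exact Submodule.zero_mem _
        | succ j ihj =>
          intro b
          set z := (Y ^ j) v₁ with hz
          set b' : ↥A := ⟨⁅(b : K), y⁆, hcl b y⟩ with hb'
          have hsucc : (Y ^ (j + 1)) v₁ = Y z := by rw [pow_succ']; rfl
          have hbY : ρ (b : K) (Y z) = Y (ρ (b : K) z) + ρ (⁅(b : K), y⁆) z := by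
            have h5 : ρ ⁅(b : K), y⁆ = ρ (b : K) * Y - Y * ρ (b : K) := by
              rw [LieHom.map_lie, Ring.lie_def]
            rw [h5]
            simp only [LinearMap.sub_apply, Module.End.mul_apply]
            abel
          have hu : ρ (b : K) z - χ b • z ∈ U j := ihj b
          have hu' : ρ (b' : K) z - χ b' • z ∈ U j := ihj b'
          have hid : ρ (b : K) ((Y ^ (j + 1)) v₁) - χ b • (Y ^ (j + 1)) v₁ =
              Y (ρ (b : K) z - χ b • z) + (χ b' • z + (ρ (b' : K) z - χ b' • z)) := by
            rw [hsucc, hbY]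
            simp only [map_sub, map_smul]
            have : ρ (b' : K) z = ρ (⁅(b : K), y⁆ : K) z := rfl
            rw [← this]
            abel
          rw [hid]
          apply Submodule.add_mem
          · exact hYmap j (Submodule.mem_map_of_mem hu)
          · apply Submodule.add_mem
            · exact Submodule.smul_mem _ _ (hmem j)
            · exact hUmono (Nat.le_succ j) hu'
      -- invariance of the flag under A
      have f4 : ∀ (i : ℕ) (b : ↥A), Submodule.map (ρ (b : K)) (U i) ≤ U i := by
        intro i b
        rw [hUdef, Submodule.map_span]
        apply Submodule.span_le.mpr
        rintro w ⟨_, ⟨j, hj, rfl⟩, rfl⟩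
        have heq : ρ (b : K) ((Y ^ j) v₁) =
            χ b • ((Y ^ j) v₁) + (ρ (b : K) ((Y ^ j) v₁) - χ b • (Y ^ j) v₁) := by abel
        rw [heq]
        apply Submodule.add_mem
        · have hj' : j < i := hj
          exact Submodule.smul_mem _ _ (hUmono (by omega : j + 1 ≤ i) (hmem j))
        · have hj' : j < i := hj
          exact hUmono (le_of_lt hj') (f3 j b)
      -- shifted invariance
      have f4' : ∀ (i : ℕ) (b : ↥A),
          Submodule.map (ρ (b : K) - χ b • 1) (U (i + 1)) ≤ U i := by
        intro i b
        rw [hUdef, Submodule.map_span]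
        apply Submodule.span_le.mpr
        rintro w ⟨_, ⟨j, hj, rfl⟩, rfl⟩
        have : (ρ (b : K) - χ b • 1) ((Y ^ j) v₁) =
            ρ (b : K) ((Y ^ j) v₁) - χ b • (Y ^ j) v₁ := by
          simp [LinearMap.sub_apply]
        rw [this]
        have hj' : j < i + 1 := hj
        exact hUmono (by omega : j ≤ i) (f3 j b)
      -- stabilization of the flag
      have hstab : ∃ m : ℕ, U (m + 1) = U (m + 2) := by
        by_contra h
        push_neg at h
        have hlt : ∀ m : ℕ, U (m + 1) < U (m + 2) := fun m =>
          lt_of_le_of_ne (hUmono (by omega)) (h m)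
        have hrank : ∀ m : ℕ, m + 1 ≤ Module.finrank F (U (m + 1)) := by
          intro m
          induction m with
          | zero =>
            have hv₁U : v₁ ∈ U 1 := by simpa using hmem 0
            haveI : Nontrivial ↥(U 1) :=
              ⟨⟨⟨v₁, hv₁U⟩, 0, by simp [Subtype.ext_iff, hv₁0]⟩⟩
            exact Module.finrank_pos
          | succ m ihm =>
            have h20 := Submodule.finrank_lt_finrank_of_lt (hlt m)
            show m + 2 ≤ Module.finrank F (U (m + 2))
            omega
        have h1 := hrank (Module.finrank F M)
        have h2 := Submodule.finrank_le (U (Module.finrank F M + 1))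
        omega
      obtain ⟨m, hm⟩ := hstab
      set Uf : Submodule F M := U (m + 1) with hUf
      have hYU : ∀ x ∈ Uf, Y x ∈ Uf := by
        intro x hx
        have : Y x ∈ Submodule.map Y (U (m + 1)) := Submodule.mem_map_of_mem hx
        exact hm ▸ (hYmap (m + 1) this)
      have hbU : ∀ b : ↥A, ∀ x ∈ Uf, ρ (b : K) x ∈ Uf := by
        intro b x hx
        exact f4 (m + 1) b (Submodule.mem_map_of_mem hx)
      have hv₁U : v₁ ∈ Uf := hUmono (by omega : 1 ≤ m + 1) (by simpa using hmem 0)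
      haveI : Nontrivial ↥Uf := ⟨⟨⟨v₁, hv₁U⟩, 0, by simp [Subtype.ext_iff, hv₁0]⟩⟩
      -- restrictions
      set rY : Module.End F ↥Uf := Y.restrict hYU with hrY
      have trace_eq : ∀ b : ↥A,
          LinearMap.trace F ↥Uf ((ρ (b : K)).restrict (hbU b)) =
            (Module.finrank F ↥Uf : F) * χ b := by
        intro b
        set rb : Module.End F ↥Uf := (ρ (b : K)).restrict (hbU b) with hrb
        set g : Module.End F ↥Uf := rb - χ b • 1 with hg
        -- g is nilpotent
        have hgnil : ∀ (j : ℕ) (u : ↥Uf), (u : M) ∈ U j → (g ^ j) u = 0 := by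
          intro j
          induction j with
          | zero =>
            intro u hu
            rw [hU0] at hu
            have : u = 0 := Subtype.ext ((Submodule.mem_bot F).mp hu)
            simp [this]
          | succ j ihj =>
            intro u hu
            have h6 : ((g u : ↥Uf) : M) ∈ U j := by
              have h7 : ((g u : ↥Uf) : M) = ρ (b : K) (u : M) - χ b • (u : M) := by
                simp only [hg, LinearMap.sub_apply, LinearMap.smul_apply, Module.End.one_apply,
                  AddSubgroupClass.coe_sub, SetLike.val_smul, hrb, LinearMap.restrict_coe_apply]
              rw [h7]
              apply f4' j b
              exact Submodule.mem_map_of_mem hu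
            have h8 : (g ^ (j + 1)) u = (g ^ j) (g u) := by rw [pow_succ]; rfl
            rw [h8]
            exact ihj (g u) h6
        have hnil : IsNilpotent g := by
          refine ⟨m + 1, ?_⟩
          apply LinearMap.ext
          intro u
          have := hgnil (m + 1) u u.2
          simpa using this
        have htr_g : LinearMap.trace F ↥Uf g = 0 := by
          have := LinearMap.isNilpotent_trace_of_isNilpotent hnil
          exact IsNilpotent.eq_zero this
        have hsplit : rb = g + χ b • 1 := by rw [hg]; abel
        rw [hsplit, map_add, htr_g, zero_add, map_smul, LinearMap.trace_one]
        rw [smul_eq_mul, mul_comm]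
      -- trace of a commutator restriction vanishes
      intro b
      have hcommutator :
          (ρ (⁅(b : K), y⁆ : K)).restrict (hbU ⟨⁅(b : K), y⁆, hcl b y⟩) =
            (ρ (b : K)).restrict (hbU b) * rY - rY * (ρ (b : K)).restrict (hbU b) := by
        apply LinearMap.ext
        intro u
        apply Subtype.ext
        have h9 : ρ ⁅(b : K), y⁆ = ρ (b : K) * Y - Y * ρ (b : K) := by
          rw [LieHom.map_lie, Ring.lie_def]
        simp only [LinearMap.restrict_apply, LinearMap.sub_apply, Module.End.mul_apply, h9]
        simp only [hrY, LinearMap.restrict_coe_apply, AddSubgroupClass.coe_sub]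
      have htr0 : LinearMap.trace F ↥Uf
          ((ρ (⁅(b : K), y⁆ : K)).restrict (hbU ⟨⁅(b : K), y⁆, hcl b y⟩)) = 0 := by
        rw [hcommutator, map_sub, LinearMap.trace_mul_comm, sub_self]
      have := trace_eq ⟨⁅(b : K), y⁆, hcl b y⟩
      rw [htr0] at this
      have hfr0 : (Module.finrank F ↥Uf : F) ≠ 0 := by
        have hpos : 0 < Module.finrank F ↥Uf := Module.finrank_pos
        exact Nat.cast_ne_zero.mpr (Nat.pos_iff_ne_zero.mp hpos)
      exact (mul_eq_zero.mp this.symm).resolve_left hfr0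
    -- the common eigenspace of A is invariant
    set W : Submodule F M :=
      { carrier := {w | ∀ a : ↥A, ρ (a : K) w = χ a • w}
        zero_mem' := by intro a; simp
        add_mem' := by intro w w' hw hw' a; simp [hw a, hw' a, smul_add]
        smul_mem' := by
          intro c w hw a
          rw [(ρ (a : K)).map_smul, hw a, smul_comm] } with hW
    have hv₁W : v₁ ∈ W := hχ
    have hWinv : ∀ (y : K), ∀ w ∈ W, ρ y w ∈ W := by
      intro y w hw a
      have h9 : ρ (⁅(a : K), y⁆ : K) = ρ (a : K) * ρ y - ρ y * ρ (a : K) := by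
        rw [LieHom.map_lie, Ring.lie_def]
      have h10 : ρ (a : K) (ρ y w) =
          ρ y (ρ (a : K) w) + ρ (⁅(a : K), y⁆ : K) w := by
        rw [h9]
        simp only [LinearMap.sub_apply, Module.End.mul_apply]
        abel
      have h11 : ρ (⁅(a : K), y⁆ : K) w = 0 := by
        have h12 := hw ⟨⁅(a : K), y⁆, hcl a y⟩
        rw [coreχ y a] at h12
        simpa using h12
      rw [h10, h11, add_zero, hw a, map_smul]
    -- eigenvector for x₀ inside W
    haveI : Nontrivial ↥W := ⟨⟨⟨v₁, hv₁W⟩, 0, by simp [Subtype.ext_iff, hv₁0]⟩⟩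
    set X : Module.End F ↥W := (ρ x₀).restrict (hWinv x₀) with hX
    obtain ⟨c, hc⟩ := Module.End.exists_eigenvalue X
    obtain ⟨w₂, hw₂⟩ := hc.exists_hasEigenvector
    refine ⟨(w₂ : M), by simpa using hw₂.right, ?_⟩
    intro x
    set a : K := x - (φ x / φ x₀) • x₀ with ha
    have haA : a ∈ A := by
      rw [hmemA, ha]
      simp only [map_sub, map_smul, smul_eq_mul]
      field_simp
      ring
    have hx_eq : x = a + (φ x / φ x₀) • x₀ := by rw [ha]; abel
    have hρa : ρ a (w₂ : M) = χ ⟨a, haA⟩ • (w₂ : M) := w₂.2 ⟨a, haA⟩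
    have hρx₀ : ρ x₀ (w₂ : M) = c • (w₂ : M) := by
      have h13 : X w₂ = c • w₂ := hw₂.apply_eq_smul
      have h14 : ((X w₂ : ↥W) : M) = ρ x₀ (w₂ : M) := by
        rw [hX, LinearMap.restrict_apply]
      rw [← h14, h13]
      simp
    refine ⟨χ ⟨a, haA⟩ + (φ x / φ x₀) * c, ?_⟩
    have h15 : ρ x = ρ a + (φ x / φ x₀) • ρ x₀ := by
      conv_lhs => rw [hx_eq]
      rw [map_add ρ, map_smul ρ]
    rw [h15]
    simp only [LinearMap.add_apply, LinearMap.smul_apply, hρa, hρx₀]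
    rw [add_smul, smul_smul]

end LieTheorem

section Glue

universe w

attribute [local instance] LieRing.ofAssociativeRing

variable {F : Type*} [Field F] [CharZero F] [IsAlgClosed F]
variable {L : Type*} [LieRing L] [LieAlgebra F L] [FiniteDimensional F L]
  [LieAlgebra.IsSolvable L]

set_option maxHeartbeats 1000000 in
lemma glue_nilpotent (𝒱 : Set L) :
    ∀ (n : ℕ) (M : Type w) [AddCommGroup M] [Module F M] [FiniteDimensional F M],
      Module.finrank F M ≤ n →
      ∀ (ρ : L →ₗ⁅F⁆ Module.End F M), (∀ v ∈ 𝒱, IsNilpotent (ρ v)) →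
      ∀ x ∈ Submodule.span F 𝒱, IsNilpotent (ρ x) := by
  intro n
  induction n with
  | zero =>
    intro M _ _ _ hn ρ h𝒱 x hx
    haveI : Subsingleton M := by
      rw [← Module.finrank_zero_iff (R := F)]
      omega
    exact ⟨1, by apply LinearMap.ext; intro m; exact Subsingleton.elim _ _⟩
  | succ n ih =>
    intro M _ _ _ hn ρ h𝒱 x hx
    by_cases hMs : Subsingleton M
    · exact ⟨1, by apply LinearMap.ext; intro m; exact Subsingleton.elim _ _⟩
    haveI : Nontrivial M := not_subsingleton_iff_nontrivial.mp hMs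
    obtain ⟨v₀, hv₀0, hv₀⟩ := lie_common_eigenvector_aux (Module.finrank F L) L le_rfl ρ
    set χ : L → F := fun z => Classical.choose (hv₀ z) with hχdef
    have hχ : ∀ z : L, ρ z v₀ = χ z • v₀ := fun z => Classical.choose_spec (hv₀ z)
    -- ρ z kills v₀ for z in the span
    have hkill : ∀ z ∈ Submodule.span F 𝒱, ρ z v₀ = 0 := by
      intro z hz
      induction hz using Submodule.span_induction with
      | mem v hv =>
        obtain ⟨nn, hnn⟩ := h𝒱 v hv
        have hiter : ∀ j : ℕ, ((ρ v) ^ j) v₀ = (χ v) ^ j • v₀ := by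
          intro j
          induction j with
          | zero => simp
          | succ j ihj =>
            have h1 : ((ρ v) ^ (j + 1)) v₀ = (ρ v) (((ρ v) ^ j) v₀) := by
              rw [pow_succ']; rfl
            rw [h1, ihj, map_smul, hχ v, smul_smul, pow_succ, mul_comm]
        rcases nn.eq_zero_or_pos with rfl | hnpos
        · exfalso
          apply hv₀0
          have : ((ρ v) ^ 0) v₀ = 0 := by rw [hnn]; rfl
          simpa using this
        have h2 : (χ v) ^ nn • v₀ = 0 := by rw [← hiter nn, hnn]; rfl
        have hχv : χ v = 0 := by
          rcases smul_eq_zero.mp h2 with h | h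
          · exact pow_eq_zero_iff (by omega : nn ≠ 0) |>.mp h
          · exact absurd h hv₀0
        rw [hχ v, hχv, zero_smul]
      | zero => simp
      | add a b _ _ ha hb => rw [map_add ρ]; simp [LinearMap.add_apply, ha, hb]
      | smul c a _ ha => rw [map_smul ρ]; simp [ha]
    set D : Submodule F M := Submodule.span F {v₀} with hD
    have hv₀D : v₀ ∈ D := Submodule.mem_span_singleton_self v₀
    have hDne : D ≠ ⊥ := by
      rw [hD, Ne, Submodule.span_singleton_eq_bot]
      exact hv₀0
    have hle : ∀ z : L, D ≤ Submodule.comap (ρ z) D := by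
      intro z m hm
      obtain ⟨c, rfl⟩ := Submodule.mem_span_singleton.mp hm
      rw [Submodule.mem_comap, map_smul, hχ z]
      exact Submodule.smul_mem _ _ (Submodule.smul_mem _ _ hv₀D)
    -- the quotient representation
    set ρ' : L →ₗ⁅F⁆ Module.End F (M ⧸ D) :=
      { toFun := fun z => Submodule.mapQ D D (ρ z) (hle z)
        map_add' := by
          intro a b
          apply Submodule.linearMap_qext
          apply LinearMap.ext
          intro m
          simp [Submodule.mapQ_apply, ρ.map_add]
        map_smul' := by
          intro c a
          apply Submodule.linearMap_qext
          apply LinearMap.ext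
          intro m
          simp [Submodule.mapQ_apply, ρ.map_smul]
        map_lie' := by
          intro a b
          apply Submodule.linearMap_qext
          apply LinearMap.ext
          intro m
          have h3 : ρ ⁅a, b⁆ = ρ a * ρ b - ρ b * ρ a := by
            rw [LieHom.map_lie, Ring.lie_def]
          simp only [LinearMap.comp_apply, Submodule.mkQ_apply, Submodule.mapQ_apply, h3,
            Ring.lie_def, LinearMap.sub_apply, Module.End.mul_apply, map_sub,
            Submodule.mapQ_apply]
          rw [Submodule.Quotient.mk_sub] } with hρ'
    have hρ'app : ∀ (z : L) (m : M),
        ρ' z (Submodule.Quotient.mk m) = Submodule.Quotient.mk (ρ z m) := by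
      intro z m
      rw [hρ']
      rfl
    have hcompat : ∀ (z : L) (j : ℕ) (m : M),
        ((ρ' z) ^ j) (Submodule.Quotient.mk m) = Submodule.Quotient.mk (((ρ z) ^ j) m) := by
      intro z j
      induction j with
      | zero => intro m; simp
      | succ j ihj =>
        intro m
        have h4 : ((ρ' z) ^ (j + 1)) (Submodule.Quotient.mk m) =
            (ρ' z) (((ρ' z) ^ j) (Submodule.Quotient.mk m)) := by rw [pow_succ']; rfl
        have h5 : ((ρ z) ^ (j + 1)) m = (ρ z) (((ρ z) ^ j) m) := by rw [pow_succ']; rfl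
        rw [h4, h5, ihj, hρ'app]
    -- finrank of the quotient drops
    have hfr : Module.finrank F (M ⧸ D) ≤ n := by
      have h6 := Submodule.finrank_quotient_add_finrank D
      haveI : Nontrivial ↥D := ⟨⟨⟨v₀, hv₀D⟩, 0, by simp [Subtype.ext_iff, hv₀0]⟩⟩
      have h7 : 0 < Module.finrank F D := Module.finrank_pos
      omega
    have h𝒱' : ∀ v ∈ 𝒱, IsNilpotent (ρ' v) := by
      intro v hv
      obtain ⟨nn, hnn⟩ := h𝒱 v hv
      refine ⟨nn, ?_⟩
      apply Submodule.linearMap_qext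
      apply LinearMap.ext
      intro m
      simp only [LinearMap.comp_apply, Submodule.mkQ_apply, LinearMap.zero_apply,
        LinearMap.zero_comp]
      rw [hcompat v nn m, hnn]
      simp
    obtain ⟨aa, haa⟩ := ih (M ⧸ D) hfr ρ' h𝒱' x hx
    refine ⟨aa + 1, ?_⟩
    apply LinearMap.ext
    intro m
    have h8 : ((ρ x) ^ (aa + 1)) m = (ρ x) (((ρ x) ^ aa) m) := by rw [pow_succ']; rfl
    have h9 : ((ρ x) ^ aa) m ∈ D := by
      have h10 : ((ρ' x) ^ aa) (Submodule.Quotient.mk m) = 0 := by rw [haa]; rfl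
      rw [hcompat x aa m] at h10
      exact (Submodule.Quotient.mk_eq_zero D).mp h10
    obtain ⟨c, hc⟩ := Submodule.mem_span_singleton.mp h9
    rw [h8, ← hc, map_smul, hkill x hx]
    simp

end Glue


theorem solvable_with_invertible_leibnizDerivation_nilpotent
    {F L : Type*} [Field F] [CharZero F] [IsAlgClosed F] [LieRing L] [LieAlgebra F L]
    [FiniteDimensional F L] [LieAlgebra.IsSolvable L]
    {k : ℕ} (hk : 1 ≤ k) (P : L →ₗ[F] L) (hP : IsLeibnizDerivation k P)
    (hinv : Function.Bijective P) :
    LieModule.IsNilpotent L L := by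
  set 𝒱 : Set L := ⋃ μ : F, ((Module.End.genEigenspace P μ ⊤ : Submodule F L) : Set L) with h𝒱
  have hspan : Submodule.span F 𝒱 = ⊤ := by
    rw [h𝒱, Submodule.span_iUnion]
    simp only [Submodule.span_eq]
    exact Module.End.iSup_maxGenEigenspace_eq_top P
  have hnil : ∀ v ∈ 𝒱, IsNilpotent (LieAlgebra.ad F L v) := by
    intro v hv
    rw [h𝒱, Set.mem_iUnion] at hv
    obtain ⟨μ, hμ⟩ := hv
    exact ad_nilpotent_of_genEigenvector hk hP hinv.injective hμ
  refine (LieAlgebra.isNilpotent_iff_forall (R := F)).mpr ?_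
  intro x
  exact glue_nilpotent 𝒱 (Module.finrank F L) L le_rfl (LieAlgebra.ad F L) hnil x
    (by rw [hspan]; exact Submodule.mem_top)
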